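/- Let c_n = ∫₀¹ t·Γ(n−t)/(Γ(n+1)·Γ(1−t)) dt for n ≥ 1. Then for every u ∈ 𝔻 the series Σ_{n=1}^∞ c_n·u^n converges absolutely, its sum equals 1 + u/log(1−u) for u ≠ 0 (and equals 0 for u = 0, with log the principal branch), and moreover Σ_{n=1}^∞ c_n ≤ 1. -/

import Mathlib

open Complex

/-- The Gregory-type coefficients `c_n = ∫₀¹ t·Γ(n−t)/(Γ(n+1)·Γ(1−t)) dt`. -/
noncomputable def cGreg (n : ℕ) : ℝ :=
  ∫ t in (0 : ℝ)..1, t * Real.Gamma ((n : ℝ) - t) /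
    (Real.Gamma ((n : ℝ) + 1) * Real.Gamma (1 - t))

open Finset MeasureTheory intervalIntegral Set

noncomputable def bc (t : ℝ) (n : ℕ) : ℝ := (∏ j ∈ Finset.range n, (t - j)) / n.factorial

lemma bc_zero (t : ℝ) : bc t 0 = 1 := by simp [bc]

lemma bc_succ (t : ℝ) (n : ℕ) : bc t (n + 1) = bc t n * (t - n) / (n + 1) := by
  rw [bc, bc, Finset.prod_range_succ, Nat.factorial_succ, Nat.cast_mul,
    div_mul_eq_mul_div, div_div, Nat.cast_add, Nat.cast_one, mul_comm ((n:ℝ)+1)]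

lemma abs_bc_succ_le {t : ℝ} (ht : t ∈ Set.Icc (0:ℝ) 1) (n : ℕ) :
    |bc t (n + 1)| ≤ 1 / (n + 1) := by
  obtain ⟨h0, h1t⟩ := ht
  induction n with
  | zero => simpa [bc] using abs_le.mpr ⟨by linarith, by linarith⟩
  | succ n ih =>
      rw [bc_succ, abs_div, abs_mul]
      have h1 : |t - ((n:ℝ)+1)| ≤ (n:ℝ) + 1 := by
        rw [abs_le]; constructor <;> push_cast <;> linarith [Nat.cast_nonneg (α := ℝ) n]
      have h2 : |((n:ℝ) + 1 + 1)| = (n:ℝ) + 2 := by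
        rw [abs_of_pos (by positivity)]; ring
      push_cast
      rw [h2, div_le_div_iff₀ (by positivity) (by positivity)]
      have := mul_le_mul ih h1 (abs_nonneg _) (by positivity)
      calc |bc t (n+1)| * |t - ((n:ℝ)+1)| * ((n:ℝ)+1+1)
          ≤ (1/((n:ℝ)+1) * ((n:ℝ)+1)) * ((n:ℝ)+1+1) := by
            apply mul_le_mul_of_nonneg_right this (by positivity)
        _ = 1 * ((n:ℝ)+2) := by field_simp; ring

lemma abs_bc_le {t : ℝ} (ht : t ∈ Set.Icc (0:ℝ) 1) (n : ℕ) : |bc t n| ≤ 1 := by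
  cases n with
  | zero => simp [bc_zero]
  | succ n =>
      refine (abs_bc_succ_le ht n).trans ?_
      rw [div_le_one (by positivity)]
      linarith [Nat.cast_nonneg (α := ℝ) n]

lemma summable_bc {t : ℝ} (ht : t ∈ Set.Icc (0:ℝ) 1) {u : ℂ} (hu : ‖u‖ < 1) :
    Summable (fun n => (bc t n : ℂ) * u ^ n) := by
  refine Summable.of_norm_bounded (g := fun n => ‖u‖ ^ n)
    (summable_geometric_of_lt_one (norm_nonneg u) hu) (fun n => ?_)
  rw [norm_mul, norm_pow]
  calc ‖(bc t n : ℂ)‖ * ‖u‖ ^ n ≤ 1 * ‖u‖ ^ n := by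
        apply mul_le_mul_of_nonneg_right _ (by positivity)
        rw [Complex.norm_real, Real.norm_eq_abs]; exact abs_bc_le ht n
    _ = ‖u‖ ^ n := by simp

lemma summable_d {t : ℝ} (ht : t ∈ Set.Icc (0:ℝ) 1) {u : ℂ} (hu : ‖u‖ < 1) :
    Summable (fun n => (bc t n : ℂ) * ((n : ℂ) * u ^ (n - 1))) := by
  refine Summable.of_norm_bounded (g := fun n => ‖u‖ ^ (n - 1)) ?_ (fun n => ?_)
  · exact (summable_nat_add_iff 1).mp (by
      simpa using summable_geometric_of_lt_one (norm_nonneg u) hu)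
  · cases n with
    | zero => simp
    | succ n =>
        rw [norm_mul, norm_mul, norm_pow]
        have h1 : ‖(bc t (n+1) : ℂ)‖ ≤ 1 / (n + 1) := by
          rw [Complex.norm_real, Real.norm_eq_abs]; exact abs_bc_succ_le ht n
        have h2 : ‖((n:ℂ) + 1)‖ = (n : ℝ) + 1 := by
          rw [show ((n:ℂ)+1) = (((n+1 : ℕ)):ℂ) by push_cast; ring, Complex.norm_natCast]
          push_cast; ring
        calc ‖(bc t (n+1) : ℂ)‖ * (‖((n+1 : ℕ):ℂ)‖ * ‖u‖ ^ (n + 1 - 1))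
            ≤ (1/((n:ℝ)+1)) * (((n:ℝ)+1) * ‖u‖ ^ n) := by
              apply mul_le_mul h1 _ (by positivity) (by positivity)
              apply mul_le_mul_of_nonneg_right _ (by positivity)
              push_cast; rw [h2]
          _ = ‖u‖ ^ n := by field_simp
          _ = ‖u‖ ^ (n + 1 - 1) := by simp

lemma hasSum_bc {t : ℝ} (ht : t ∈ Set.Icc (0:ℝ) 1) {u : ℂ} (hu : ‖u‖ < 1) :
    HasSum (fun n => (bc t n : ℂ) * u ^ n)
      (Complex.exp (t * Complex.log (1 + u))) := by
  set r : ℝ := (1 + ‖u‖) / 2 with hr_def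
  have hur : ‖u‖ < r := by rw [hr_def]; linarith
  have hr1 : r < 1 := by rw [hr_def]; linarith
  have hr0 : (0:ℝ) < r := lt_of_le_of_lt (norm_nonneg u) hur
  set s : Set ℂ := Metric.ball (0:ℂ) r with hs_def
  have husmem : u ∈ s := mem_ball_zero_iff.mpr (by simpa using hur)
  have h0mem : (0:ℂ) ∈ s := mem_ball_zero_iff.mpr (by simpa using hr0)
  have hmem1 : ∀ y ∈ s, ‖y‖ < 1 := by
    intro y hy
    exact lt_trans (by simpa using mem_ball_zero_iff.mp hy) hr1
  set w : ℕ → ℝ := fun n => r ^ (n - 1) with hw_def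
  have hw : Summable w := by
    rw [← summable_nat_add_iff 1]
    simpa [hw_def] using summable_geometric_of_lt_one hr0.le hr1
  set g : ℕ → ℂ → ℂ := fun n y => (bc t n : ℂ) * y ^ n with hg_def
  set g' : ℕ → ℂ → ℂ := fun n y => (bc t n : ℂ) * ((n:ℂ) * y ^ (n - 1)) with hg'_def
  have hg : ∀ n y, y ∈ s → HasDerivAt (g n) (g' n y) y :=
    fun n y _ => (hasDerivAt_pow n y).const_mul _
  have hgb : ∀ n y, y ∈ s → ‖g' n y‖ ≤ w n := by
    intro n y hy
    have hyr : ‖y‖ < r := mem_ball_zero_iff.mp hy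
    cases n with
    | zero => simp [hg'_def, hw_def]
    | succ n =>
        simp only [hg'_def, hw_def, Nat.add_sub_cancel]
        rw [norm_mul, norm_mul, norm_pow]
        have h1 : ‖(bc t (n+1) : ℂ)‖ ≤ 1 / (n + 1) := by
          rw [Complex.norm_real, Real.norm_eq_abs]; exact abs_bc_succ_le ht n
        have h2 : ‖((n+1 : ℕ):ℂ)‖ = (n : ℝ) + 1 := by
          rw [Complex.norm_natCast]; push_cast; ring
        calc ‖(bc t (n+1) : ℂ)‖ * (‖((n+1 : ℕ):ℂ)‖ * ‖y‖ ^ n)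
            ≤ (1/((n:ℝ)+1)) * (((n:ℝ)+1) * r ^ n) := by
              apply mul_le_mul h1 _ (by positivity) (by positivity)
              rw [h2]
              apply mul_le_mul_of_nonneg_left _ (by positivity)
              exact pow_le_pow_left₀ (norm_nonneg _) hyr.le n
          _ = r ^ n := by field_simp
  have hg0 : Summable fun n => g n 0 := summable_bc ht (by simp)
  have hF : ∀ y ∈ s, HasDerivAt (fun z => ∑' n, g n z) (∑' n, g' n y) y :=
    fun y hy => hasDerivAt_tsum_of_isPreconnected hw Metric.isOpen_ball
      (convex_ball _ _).isPreconnected hg hgb h0mem hg0 hy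
  set F : ℂ → ℂ := fun z => ∑' n, g n z with hF_def
  set D : ℂ → ℂ := fun y => ∑' n, g' n y with hD_def
  have key : ∀ y ∈ s, ((1:ℂ) + y) * D y = (t:ℂ) * F y := by
    intro y hy
    have hy1 : ‖y‖ < 1 := hmem1 y hy
    have hDsum : HasSum (fun n => g' n y) (D y) := (summable_d ht hy1).hasSum
    have hFsum : HasSum (fun n => g n y) (F y) := (summable_bc ht hy1).hasSum
    have hyD : HasSum (fun n : ℕ => (n:ℂ) * (bc t n : ℂ) * y ^ n) (y * D y) := by
      have h := hDsum.mul_left y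
      have e1 : (fun n => y * g' n y) = fun n : ℕ => (n:ℂ) * (bc t n : ℂ) * y ^ n := by
        funext n
        cases n with
        | zero => simp [hg'_def]
        | succ n =>
            simp only [hg'_def, Nat.add_sub_cancel]
            rw [pow_succ']
            ring
      rwa [e1] at h
    have hshift : HasSum (fun n => g' (n+1) y) (D y) := by
      have h := (hasSum_nat_add_iff' (f := fun n => g' n y) 1).mpr hDsum
      simpa [hg'_def] using h
    have e2 : (fun n => g' (n+1) y) =
        fun n : ℕ => (t:ℂ) * ((bc t n : ℂ) * y ^ n) - (n:ℂ) * (bc t n : ℂ) * y ^ n := by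
      funext n
      have hne : ((n:ℂ)+1) ≠ 0 := Nat.cast_add_one_ne_zero n
      simp only [hg'_def, Nat.add_sub_cancel, bc_succ]
      push_cast
      field_simp
    rw [e2] at hshift
    have h3 : HasSum (fun n : ℕ => (t:ℂ) * ((bc t n : ℂ) * y ^ n) - (n:ℂ) * (bc t n : ℂ) * y ^ n)
        ((t:ℂ) * F y - y * D y) := (hFsum.mul_left _).sub hyD
    have := hshift.unique h3
    linear_combination this
  have hslit : ∀ y ∈ s, (1:ℂ) + y ∈ Complex.slitPlane := by
    intro y hy
    exact Complex.mem_slitPlane_of_norm_lt_one (by simpa using hmem1 y hy)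
  have hPhi : ∀ y ∈ s,
      HasDerivAt (fun z => F z * Complex.exp (-(t:ℂ) * Complex.log (1 + z))) 0 y := by
    intro y hy
    have hne : (1:ℂ) + y ≠ 0 := Complex.slitPlane_ne_zero (hslit y hy)
    have hlog : HasDerivAt (fun z : ℂ => Complex.log (1 + z)) ((1 + y)⁻¹) y := by
      have h1 : HasDerivAt (fun z : ℂ => 1 + z) 1 y := (hasDerivAt_id y).const_add 1
      exact ((Complex.hasDerivAt_log (hslit y hy)).comp y h1).congr_deriv (mul_one _)
    have hexp : HasDerivAt (fun z : ℂ => Complex.exp (-(t:ℂ) * Complex.log (1 + z)))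
        (Complex.exp (-(t:ℂ) * Complex.log (1 + y)) * (-(t:ℂ) * (1 + y)⁻¹)) y := by
      exact (hlog.const_mul (-(t:ℂ))).cexp
    have h := (hF y hy).mul hexp
    refine h.congr_deriv ?_
    have hkey := key y hy
    have hDval : (∑' (n : ℕ), g' n y) = (t:ℂ) * F y / (1 + y) := by
      rw [eq_div_iff hne, mul_comm]
      exact hkey
    rw [hDval]
    field_simp
    ring
  have hconst : F u * Complex.exp (-(t:ℂ) * Complex.log (1 + u)) =
      F 0 * Complex.exp (-(t:ℂ) * Complex.log (1 + 0)) := by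
    apply (convex_ball (0:ℂ) r).is_const_of_fderivWithin_eq_zero
      (fun y hy => (hPhi y hy).differentiableAt.differentiableWithinAt) ?_ husmem h0mem
    intro y hy
    rw [fderivWithin_of_isOpen Metric.isOpen_ball hy, (hPhi y hy).hasFDerivAt.fderiv]
    ext z
    simp
  have hF0 : F 0 = 1 := by
    have h : HasSum (fun n => g n 0) (g 0 0) :=
      hasSum_single 0 (fun n hn => by simp [hg_def, zero_pow hn])
    have := h.tsum_eq
    simpa [hg_def, bc_zero] using this
  have hE : Complex.exp (-(t:ℂ) * Complex.log (1 + u)) *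
      Complex.exp ((t:ℂ) * Complex.log (1 + u)) = 1 := by
    rw [← Complex.exp_add]
    ring_nf
    exact Complex.exp_zero
  have hFu : F u = Complex.exp ((t:ℂ) * Complex.log (1 + u)) := by
    rw [hF0] at hconst
    simp only [add_zero, Complex.log_one, mul_zero, Complex.exp_zero, one_mul] at hconst
    calc F u = F u * (Complex.exp (-(t:ℂ) * Complex.log (1 + u)) *
          Complex.exp ((t:ℂ) * Complex.log (1 + u))) := by rw [hE, mul_one]
      _ = Complex.exp ((t:ℂ) * Complex.log (1 + u)) := by rw [← mul_assoc, hconst, one_mul]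
  have := (summable_bc ht hu).hasSum
  rw [show (∑' n, (bc t n : ℂ) * u ^ n) = F u from rfl, hFu] at this
  exact this

lemma bc_cont (n : ℕ) : Continuous fun t : ℝ => bc t n := by
  unfold bc
  exact (continuous_finset_prod _ (fun j _ => by continuity)).div_const _

lemma gamma_prod (n : ℕ) {t : ℝ} (ht : t ∈ Set.Ioo (0:ℝ) 1) :
    Real.Gamma ((n:ℝ) + 1 - t) = (∏ j ∈ Finset.range n, ((j:ℝ) + 1 - t)) * Real.Gamma (1 - t) := by
  induction n with
  | zero => simp
  | succ n ih =>
      have harg : ((n:ℝ) + 1 - t) ≠ 0 := by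
        have h1 : (0:ℝ) ≤ n := Nat.cast_nonneg n
        have h2 := ht.2
        exact ne_of_gt (by linarith)
      have : ((n+1:ℕ):ℝ) + 1 - t = ((n:ℝ) + 1 - t) + 1 := by push_cast; ring
      rw [this, Real.Gamma_add_one harg, ih, Finset.prod_range_succ]
      push_cast
      ring

lemma prod_flip (n : ℕ) (t : ℝ) :
    (∏ j ∈ Finset.range n, ((j:ℝ) + 1 - t)) = (-1:ℝ)^n * ∏ j ∈ Finset.range n, (t - ((j:ℝ)+1)) := by
  induction n with
  | zero => simp
  | succ n ih => rw [Finset.prod_range_succ, Finset.prod_range_succ, ih]; push_cast; ring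

lemma bc_sign (n : ℕ) (t : ℝ) :
    (-1:ℝ)^n * bc t (n+1) = t * (∏ j ∈ Finset.range n, ((j:ℝ) + 1 - t)) / (n+1).factorial := by
  rw [bc, Finset.prod_range_succ', prod_flip]
  push_cast
  ring

lemma integrand_eq (n : ℕ) {t : ℝ} (ht : t ∈ Set.Ioo (0:ℝ) 1) :
    t * Real.Gamma (((n+1:ℕ) : ℝ) - t) / (Real.Gamma (((n+1:ℕ) : ℝ) + 1) * Real.Gamma (1 - t))
      = (-1:ℝ)^n * bc t (n+1) := by
  have hG : Real.Gamma (1 - t) ≠ 0 :=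
    (Real.Gamma_pos_of_pos (by linarith [ht.2])).ne'
  have hfact : Real.Gamma (((n+1:ℕ) : ℝ) + 1) = (n+1).factorial := by
    rw [show (((n+1:ℕ):ℝ) + 1) = ((n+2:ℕ):ℝ) by push_cast; ring]
    rw [show ((n+2:ℕ):ℝ) = ((n+1:ℕ):ℝ) + 1 from by push_cast; ring]
    exact_mod_cast Real.Gamma_nat_eq_factorial (n+1)
  have harg : (((n+1:ℕ)):ℝ) - t = (n:ℝ) + 1 - t := by push_cast; ring
  rw [harg, gamma_prod n ht, hfact, bc_sign]
  have hf : ((n+1).factorial : ℝ) ≠ 0 := Nat.cast_ne_zero.mpr (Nat.factorial_ne_zero _)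
  field_simp

lemma cGreg_eq (n : ℕ) : cGreg (n+1) = ∫ t in (0:ℝ)..1, (-1:ℝ)^n * bc t (n+1) := by
  rw [cGreg, intervalIntegral.integral_of_le zero_le_one,
    intervalIntegral.integral_of_le zero_le_one,
    MeasureTheory.integral_Ioc_eq_integral_Ioo, MeasureTheory.integral_Ioc_eq_integral_Ioo]
  exact MeasureTheory.setIntegral_congr_fun measurableSet_Ioo (fun t ht => integrand_eq n ht)

lemma cGreg_eq_Ioc (n : ℕ) :
    cGreg (n+1) = (-1:ℝ)^n * ∫ t in Set.Ioc (0:ℝ) 1, bc t (n+1) := by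
  rw [cGreg_eq, intervalIntegral.integral_const_mul, intervalIntegral.integral_of_le zero_le_one]

lemma cGreg_nonneg (n : ℕ) : 0 ≤ cGreg (n+1) := by
  rw [cGreg_eq]
  apply intervalIntegral.integral_nonneg zero_le_one
  intro t ht
  rw [bc_sign]
  have h1 : 0 ≤ t := ht.1
  have h2 : 0 ≤ ∏ j ∈ Finset.range n, ((j:ℝ) + 1 - t) := by
    apply Finset.prod_nonneg
    intro j _
    have : (0:ℝ) ≤ j := Nat.cast_nonneg j
    linarith [ht.2]
  positivity

lemma cGreg_abs_le (n : ℕ) : |cGreg (n+1)| ≤ 1 := by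
  rw [cGreg_eq]
  have h := intervalIntegral.norm_integral_le_of_norm_le_const
    (C := 1) (f := fun t => (-1:ℝ)^n * bc t (n+1)) (a := 0) (b := 1) ?_
  · rw [Real.norm_eq_abs] at h
    calc |∫ t in (0:ℝ)..1, (-1:ℝ)^n * bc t (n+1)| ≤ 1 * |1 - 0| := h
      _ = 1 := by norm_num
  · intro t ht
    rw [Set.uIoc_of_le zero_le_one] at ht
    have htm : t ∈ Set.Icc (0:ℝ) 1 := ⟨ht.1.le, ht.2⟩
    rw [Real.norm_eq_abs, _root_.abs_mul, _root_.abs_pow, _root_.abs_neg, _root_.abs_one, one_pow, one_mul]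
    exact abs_bc_le htm (n+1)

lemma hasSum_cGreg {u : ℂ} (hu : ‖u‖ < 1) (hu0 : u ≠ 0) :
    HasSum (fun n : ℕ => (cGreg (n+1) : ℂ) * u ^ (n+1)) (1 + u / Complex.log (1 - u)) := by
  set v : ℂ := -u with hv
  have hv1 : ‖v‖ < 1 := by simpa [hv] using hu
  set L : ℂ := Complex.log (1 - u) with hL
  have h1u : (1:ℂ) - u ≠ 0 := by
    intro h
    rw [sub_eq_zero] at h
    rw [← h] at hu
    simp at hu
  have hexpL : Complex.exp L = 1 - u := Complex.exp_log h1u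
  have hL0 : L ≠ 0 := by
    intro h
    rw [h, Complex.exp_zero] at hexpL
    rw [eq_comm, sub_eq_self] at hexpL
    exact hu0 hexpL
  have hpt : ∀ t ∈ Set.Ioc (0:ℝ) 1,
      HasSum (fun n : ℕ => (bc t (n+1) : ℂ) * v ^ (n+1)) (Complex.exp (t * L) - 1) := by
    intro t ht
    have htI : t ∈ Set.Icc (0:ℝ) 1 := ⟨ht.1.le, ht.2⟩
    have h := hasSum_bc htI hv1
    have h1v : (1:ℂ) + v = 1 - u := by rw [hv]; ring
    rw [h1v] at h
    have h2 := (hasSum_nat_add_iff' (f := fun n => (bc t n : ℂ) * v ^ n) 1).mpr h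
    simpa [bc_zero] using h2
  have hwint : ∀ n : ℕ, MeasureTheory.IntegrableOn
      (fun t : ℝ => (bc t (n+1) : ℂ) * v ^ (n+1)) (Set.Ioc 0 1) := by
    intro n
    exact ((Complex.continuous_ofReal.comp (bc_cont (n+1))).mul
      continuous_const).integrableOn_Ioc
  have hnorm : ∀ n : ℕ, (∫ t in Set.Ioc (0:ℝ) 1, ‖(bc t (n+1) : ℂ) * v ^ (n+1)‖)
      ≤ ‖v‖ ^ (n+1) := by
    intro n
    have hb : ∀ t ∈ Set.Ioc (0:ℝ) 1,
        ‖(bc t (n+1):ℂ) * v^(n+1)‖ ≤ ‖v‖ ^ (n+1) := by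
      intro t ht
      rw [norm_mul, norm_pow, Complex.norm_real, Real.norm_eq_abs]
      calc |bc t (n+1)| * ‖v‖^(n+1) ≤ 1 * ‖v‖^(n+1) :=
          mul_le_mul_of_nonneg_right (abs_bc_le ⟨ht.1.le, ht.2⟩ (n+1)) (by positivity)
        _ = ‖v‖ ^ (n+1) := by simp
    calc (∫ t in Set.Ioc (0:ℝ) 1, ‖(bc t (n+1) : ℂ) * v ^ (n+1)‖)
        ≤ ∫ _t in Set.Ioc (0:ℝ) 1, ‖v‖ ^ (n+1) := by
          apply MeasureTheory.setIntegral_mono_on (hwint n).norm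
            (MeasureTheory.integrableOn_const (by simp))
            measurableSet_Ioc hb
      _ = ‖v‖ ^ (n+1) := by simp
  have hgeo : Summable (fun n : ℕ => ‖v‖ ^ (n+1)) :=
    (summable_nat_add_iff 1).mpr (summable_geometric_of_lt_one (norm_nonneg v) hv1)
  have hsum_norm : Summable (fun n : ℕ => ∫ t in Set.Ioc (0:ℝ) 1, ‖(bc t (n+1) : ℂ) * v ^ (n+1)‖) :=
    Summable.of_nonneg_of_le
      (fun n => MeasureTheory.integral_nonneg (fun t => norm_nonneg _)) hnorm hgeo
  have hswap := MeasureTheory.hasSum_integral_of_summable_integral_norm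
    (μ := MeasureTheory.volume.restrict (Set.Ioc (0:ℝ) 1))
    (F := fun (n : ℕ) (t : ℝ) => (bc t (n+1):ℂ) * v^(n+1)) hwint hsum_norm
  have hinner : (∫ t in Set.Ioc (0:ℝ) 1, ∑' n : ℕ, (bc t (n+1):ℂ) * v^(n+1))
      = ∫ t in Set.Ioc (0:ℝ) 1, (Complex.exp (t * L) - 1) :=
    MeasureTheory.setIntegral_congr_fun measurableSet_Ioc (fun t ht => (hpt t ht).tsum_eq)
  have hftc : (∫ t in Set.Ioc (0:ℝ) 1, (Complex.exp (t * L) - 1))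
      = (Complex.exp L - 1)/L - 1 := by
    rw [← intervalIntegral.integral_of_le zero_le_one]
    have hd : ∀ x ∈ Set.uIcc (0:ℝ) 1,
        HasDerivAt (fun x : ℝ => Complex.exp (x * L)/L - x) (Complex.exp (x * L) - 1) x := by
      intro x _
      have h1 : HasDerivAt (fun x : ℝ => (x:ℂ)) 1 x := by
        exact Complex.ofRealCLM.hasDerivAt.congr_deriv (by simp)
      have h2 : HasDerivAt (fun x : ℝ => (x:ℂ) * L) L x := by simpa using h1.mul_const L
      have h3 := h2.cexp
      have h4 := (h3.div_const L).sub h1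
      refine h4.congr_deriv ?_
      field_simp
    rw [intervalIntegral.integral_eq_sub_of_hasDerivAt hd
      (by apply Continuous.intervalIntegrable; continuity)]
    push_cast
    rw [one_mul, zero_mul, Complex.exp_zero]
    field_simp
    ring
  have hterm : ∀ n : ℕ, (∫ t in Set.Ioc (0:ℝ) 1, (bc t (n+1):ℂ) * v^(n+1))
      = -((cGreg (n+1) : ℂ) * u^(n+1)) := by
    intro n
    have hoc : (∫ a in Set.Ioc (0:ℝ) 1, ((bc a (n + 1) : ℝ) : ℂ))
        = ((∫ a in Set.Ioc (0:ℝ) 1, bc a (n+1) : ℝ) : ℂ) := integral_ofReal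
    rw [MeasureTheory.integral_mul_const, hoc, cGreg_eq_Ioc, hv]
    push_cast
    ring
  rw [hinner, hftc] at hswap
  have hneg := hswap.neg
  have hfun : (fun n : ℕ => -(∫ t in Set.Ioc (0:ℝ) 1, (bc t (n+1):ℂ) * v^(n+1)))
      = fun n : ℕ => (cGreg (n+1) : ℂ) * u^(n+1) := by
    funext n
    rw [hterm n, neg_neg]
  rw [hfun] at hneg
  have hval : -((Complex.exp L - 1)/L - 1) = 1 + u / L := by
    rw [hexpL]
    field_simp
    ring
  rwa [hval] at hneg

lemma summable_abs_cGreg {u : ℂ} (hu : ‖u‖ < 1) :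
    Summable (fun n : ℕ => ‖(cGreg (n + 1) : ℂ) * u ^ (n + 1)‖) := by
  have hgeo : Summable (fun n : ℕ => ‖u‖ ^ (n+1)) :=
    (summable_nat_add_iff 1).mpr (summable_geometric_of_lt_one (norm_nonneg u) hu)
  refine Summable.of_nonneg_of_le (fun n => norm_nonneg _) (fun n => ?_) hgeo
  rw [norm_mul, norm_pow]
  calc ‖((cGreg (n+1):ℝ):ℂ)‖ * ‖u‖ ^ (n+1)
      ≤ 1 * ‖u‖ ^ (n+1) := by
        apply mul_le_mul_of_nonneg_right _ (by positivity)
        rw [Complex.norm_real, Real.norm_eq_abs]; exact cGreg_abs_le n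
    _ = _ := one_mul _

lemma tsum_r_le {r : ℝ} (hr0 : 0 < r) (hr1 : r < 1) :
    Summable (fun n : ℕ => cGreg (n+1) * r^(n+1)) ∧
      (∑' n : ℕ, cGreg (n+1) * r^(n+1)) ≤ 1 := by
  have hru : ‖(r:ℂ)‖ < 1 := by
    rw [Complex.norm_real, Real.norm_eq_abs, abs_of_pos hr0]; exact hr1
  have hne : (r:ℂ) ≠ 0 := Complex.ofReal_ne_zero.mpr hr0.ne'
  have hC := hasSum_cGreg hru hne
  have h1 : (fun n : ℕ => ‖(cGreg (n+1):ℂ) * (r:ℂ)^(n+1)‖)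
      = fun n : ℕ => |cGreg (n+1) * r^(n+1)| := by
    funext n
    rw [← Real.norm_eq_abs, ← Complex.norm_real]
    norm_cast
  have hs : Summable (fun n : ℕ => cGreg (n+1) * r^(n+1)) := by
    have h2 := summable_abs_cGreg hru
    rw [h1] at h2
    exact h2.of_abs
  refine ⟨hs, ?_⟩
  have h3 : ((∑' n : ℕ, cGreg (n+1) * r^(n+1) : ℝ) : ℂ)
      = ∑' n : ℕ, (cGreg (n+1):ℂ) * (r:ℂ)^(n+1) := by
    rw [Complex.ofReal_tsum]
    push_cast
    rfl
  have hlog : Complex.log (1 - (r:ℂ)) = ((Real.log (1 - r) : ℝ) : ℂ) := by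
    rw [show (1 - (r:ℂ)) = (((1 - r : ℝ)):ℂ) by push_cast; ring,
      Complex.ofReal_log (by linarith)]
  have h4 : ((∑' n : ℕ, cGreg (n+1) * r^(n+1) : ℝ) : ℂ)
      = (((1 + r / Real.log (1 - r) : ℝ)) : ℂ) := by
    rw [h3, hC.tsum_eq, hlog]
    push_cast
    rfl
  have h5 : (∑' n : ℕ, cGreg (n+1) * r^(n+1)) = 1 + r / Real.log (1 - r) :=
    Complex.ofReal_injective h4
  rw [h5]
  have hlneg : Real.log (1 - r) < 0 := Real.log_neg (by linarith) (by linarith)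
  have : r / Real.log (1 - r) < 0 := div_neg_of_pos_of_neg hr0 hlneg
  linarith

lemma partial_cGreg_le (N : ℕ) : ∑ n ∈ Finset.range N, cGreg (n+1) ≤ 1 := by
  have key : ∀ r ∈ Set.Ioo (0:ℝ) 1,
      ∑ n ∈ Finset.range N, cGreg (n+1) * r^(n+1) ≤ 1 := by
    intro r hr
    obtain ⟨hs, hle⟩ := tsum_r_le hr.1 hr.2
    refine le_trans (Summable.sum_le_tsum (Finset.range N) (fun n _ => ?_) hs) hle
    exact mul_nonneg (cGreg_nonneg n) (pow_nonneg hr.1.le _)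
  have h1 : (1:ℝ) ∈ closure (Set.Ioo (0:ℝ) 1) := by
    rw [closure_Ioo (by norm_num : (0:ℝ) ≠ 1)]
    exact ⟨zero_le_one, le_refl 1⟩
  haveI := mem_closure_iff_nhdsWithin_neBot.mp h1
  have hcont : Filter.Tendsto (fun r : ℝ => ∑ n ∈ Finset.range N, cGreg (n+1) * r^(n+1))
      (nhdsWithin 1 (Set.Ioo 0 1))
      (nhds (∑ n ∈ Finset.range N, cGreg (n+1) * (1:ℝ)^(n+1))) :=
    ((Continuous.tendsto (by continuity) 1)).mono_left nhdsWithin_le_nhds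
  have hev : ∀ᶠ r in nhdsWithin (1:ℝ) (Set.Ioo 0 1),
      ∑ n ∈ Finset.range N, cGreg (n+1) * r^(n+1) ≤ 1 :=
    eventually_nhdsWithin_of_forall key
  have := le_of_tendsto hcont hev
  simpa using this

/-- For every `u` in the unit disc, `Σ_{n≥1} c_n·uⁿ` converges absolutely with sum
`1 + u/log(1−u)` for `u ≠ 0` (and sum `0` for `u = 0`); moreover `Σ_{n≥1} c_n ≤ 1`. -/
theorem cGreg_series :
    (∀ u : ℂ, ‖u‖ < 1 →
      Summable (fun n : ℕ => ‖(cGreg (n + 1) : ℂ) * u ^ (n + 1)‖) ∧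
      (∑' n : ℕ, (cGreg (n + 1) : ℂ) * u ^ (n + 1)) =
        (if u = 0 then 0 else 1 + u / Complex.log (1 - u))) ∧
    Summable (fun n : ℕ => cGreg (n + 1)) ∧ (∑' n : ℕ, cGreg (n + 1)) ≤ 1 := by
  refine ⟨fun u hu => ⟨summable_abs_cGreg hu, ?_⟩, ?_, ?_⟩
  · by_cases h0 : u = 0
    · subst h0
      simp
    · rw [if_neg h0]
      exact (hasSum_cGreg hu h0).tsum_eq
  · exact summable_of_sum_range_le (fun n => cGreg_nonneg n) partial_cGreg_le
  · exact Real.tsum_le_of_sum_range_le (fun n => cGreg_nonneg n) partial_cGreg_le
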